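/- Let H be a Hilbert space, β ∈ L²(0,T; H), and h ∈ (0, T/2). Then h^{-1} ∫₀^{T-2h} ‖β(t+h) - β(t)‖² dt ≤ 4 h^{-2} ∫₀^{T-h} ∫₀^h ‖β(t+τ) - β(t)‖² dτ dt. -/

import Mathlib

open MeasureTheory Measure Set
open scoped ENNReal

namespace Stmt5Aux

lemma lint_shift (f : ℝ → ℝ≥0∞) (c a b : ℝ) :
    ∫⁻ t in Ioc a b, f (t + c) = ∫⁻ s in Ioc (a+c) (b+c), f s := by
  have h1 := (measurePreserving_add_right volume c).setLIntegral_comp_emb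
      (MeasurableEquiv.addRight c).measurableEmbedding f (Ioc a b)
  rw [h1]
  congr 1
  rw [show (fun x : ℝ => x + c) '' Ioc a b = Ioc (a+c) (b+c) from Set.image_add_const_Ioc ..]

lemma lint_reflect (f : ℝ → ℝ≥0∞) (c a b : ℝ) :
    ∫⁻ t in Ico (c - b) (c - a), f (c - t) = ∫⁻ s in Ioc a b, f s := by
  let e : ℝ ≃ᵐ ℝ := ⟨⟨fun x => c - x, fun x => c - x, fun x => by ring, fun x => by ring⟩,
    measurable_const.sub measurable_id, measurable_const.sub measurable_id⟩
  have hmp : MeasurePreserving (fun t : ℝ => c - t) volume volume := by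
    have h2 : (fun t : ℝ => c - t) = (fun t : ℝ => c + t) ∘ (fun t : ℝ => -t) := by
      funext t; simp [sub_eq_add_neg]
    rw [h2]
    exact (measurePreserving_add_left volume c).comp
      (measurePreserving_neg volume)
  have h1 := hmp.setLIntegral_comp_emb e.measurableEmbedding f (Ico (c-b) (c-a))
  rw [h1]
  congr 1
  rw [show (fun x : ℝ => c - x) '' Ico (c-b) (c-a) = Ioc a b by
    rw [Set.image_const_sub_Ico]; ring_nf]

-- pointwise inequality
lemma ofReal_sq_sub_le {H : Type*} [NormedAddCommGroup H] (a b : H) :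
    ENNReal.ofReal (‖a - b‖^2) ≤ 2 * ENNReal.ofReal (‖a‖^2) + 2 * ENNReal.ofReal (‖b‖^2) := by
  have h0 : ‖a - b‖^2 ≤ 2*‖a‖^2 + 2*‖b‖^2 := by
    have h1 : ‖a - b‖ ≤ ‖a‖ + ‖b‖ := norm_sub_le a b
    have h2 : ‖a - b‖^2 ≤ (‖a‖ + ‖b‖)^2 := by
      have := pow_le_pow_left₀ (norm_nonneg (a-b)) h1 2
      exact this
    nlinarith [sq_nonneg (‖a‖ - ‖b‖)]
  calc ENNReal.ofReal (‖a - b‖^2) ≤ ENNReal.ofReal (2*‖a‖^2 + 2*‖b‖^2) :=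
        ENNReal.ofReal_le_ofReal h0
    _ = 2 * ENNReal.ofReal (‖a‖^2) + 2 * ENNReal.ofReal (‖b‖^2) := by
        rw [ENNReal.ofReal_add (by positivity) (by positivity),
          ENNReal.ofReal_mul (by norm_num), ENNReal.ofReal_mul (by norm_num)]
        norm_num

end Stmt5Aux

namespace Stmt5Aux

lemma ofReal_sq_tri {H : Type*} [NormedAddCommGroup H] (u v w : H) :
    ENNReal.ofReal (‖u - w‖^2) ≤ 2 * ENNReal.ofReal (‖u - v‖^2) + 2 * ENNReal.ofReal (‖v - w‖^2) := by
  have h0 : ‖u - w‖^2 ≤ 2*‖u - v‖^2 + 2*‖v - w‖^2 := by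
    have h1 : ‖u - w‖ ≤ ‖u - v‖ + ‖v - w‖ := norm_sub_le_norm_sub_add_norm_sub u v w
    have h2 : ‖u - w‖^2 ≤ (‖u - v‖ + ‖v - w‖)^2 := by
      have := pow_le_pow_left₀ (norm_nonneg (u-w)) h1 2
      exact this
    nlinarith [sq_nonneg (‖u - v‖ - ‖v - w‖)]
  calc ENNReal.ofReal (‖u - w‖^2) ≤ ENNReal.ofReal (2*‖u - v‖^2 + 2*‖v - w‖^2) :=
        ENNReal.ofReal_le_ofReal h0
    _ = 2 * ENNReal.ofReal (‖u - v‖^2) + 2 * ENNReal.ofReal (‖v - w‖^2) := by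
        rw [ENNReal.ofReal_add (by positivity) (by positivity),
          ENNReal.ofReal_mul (by norm_num), ENNReal.ofReal_mul (by norm_num)]
        norm_num

set_option maxHeartbeats 2000000 in
lemma key {H : Type*} [NormedAddCommGroup H]
    (T h : ℝ) (hh : 0 < h) (hh2 : h < T/2)
    (β : ℝ → H) (hm : StronglyMeasurable β)
    (hL2 : IntegrableOn (fun t => ‖β t‖^2) (Set.Ioc 0 T)) :
    h⁻¹ * ∫ t in (0:ℝ)..(T - 2*h), ‖β (t+h) - β t‖^2 ≤
      4 * (h^2)⁻¹ * ∫ t in (0:ℝ)..(T-h), ∫ τ in (0:ℝ)..h, ‖β (t+τ) - β t‖^2 := by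
  have hT2 : (0:ℝ) ≤ T - 2*h := by linarith
  have hTh : (0:ℝ) ≤ T - h := by linarith
  set X : ℝ → ℝ≥0∞ := fun s => ENNReal.ofReal (‖β s‖^2) with hXdef
  set g : ℝ → ℝ → ℝ≥0∞ := fun s σ => ENNReal.ofReal (‖β (s+σ) - β s‖^2) with hgdef
  set e : ℝ → ℝ → ℝ≥0∞ := fun t τ => ENNReal.ofReal (‖β (t+h) - β (t+τ)‖^2) with hedef
  set I1 : Set ℝ := Ioc (0:ℝ) (T-2*h) with hI1
  set I2 : Set ℝ := Ioc (0:ℝ) (T-h) with hI2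
  set J : Set ℝ := Ioc (0:ℝ) h with hJ
  -- measurability
  have hmg : Measurable (fun p : ℝ × ℝ => g p.1 p.2) := by
    have m1 : StronglyMeasurable (fun p : ℝ×ℝ => β (p.1+p.2) - β p.1) :=
      (hm.comp_measurable (measurable_fst.add measurable_snd)).sub
        (hm.comp_measurable measurable_fst)
    exact ENNReal.measurable_ofReal.comp (m1.norm.measurable.pow_const 2)
  have hme : Measurable (fun p : ℝ × ℝ => e p.1 p.2) := by
    have m1 : StronglyMeasurable (fun p : ℝ×ℝ => β (p.1+h) - β (p.1+p.2)) :=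
      (hm.comp_measurable (measurable_fst.add_const h)).sub
        (hm.comp_measurable (measurable_fst.add measurable_snd))
    exact ENNReal.measurable_ofReal.comp (m1.norm.measurable.pow_const 2)
  have hmX : Measurable X := ENNReal.measurable_ofReal.comp (hm.norm.measurable.pow_const 2)
  have hmD : Measurable (fun t => g t h) :=
    hmg.comp (measurable_id.prodMk measurable_const)
  set L : ℝ≥0∞ := ∫⁻ t in I1, g t h with hLdef
  set R : ℝ≥0∞ := ∫⁻ t in I2, ∫⁻ τ in J, g t τ with hRdef
  set C : ℝ≥0∞ := ∫⁻ s in Ioc (0:ℝ) T, X s with hCdef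
  have hC : C ≠ ∞ := by
    have h2 : HasFiniteIntegral (fun t => ‖β t‖^2) (volume.restrict (Ioc 0 T)) := hL2.2
    rw [hasFiniteIntegral_iff_norm] at h2
    have h3 : C = ∫⁻ s in Ioc (0:ℝ) T, ENNReal.ofReal ‖(‖β s‖^2)‖ := by
      apply lintegral_congr
      intro s
      rw [Real.norm_of_nonneg (by positivity)]
    rw [h3]
    exact h2.ne
  have hshift : ∀ t ∈ I2, (∫⁻ τ in J, X (t+τ)) ≤ C := by
    intro t ht
    have h1 : (fun τ => X (t+τ)) = fun τ => X (τ + t) := by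
      funext τ; rw [add_comm]
    rw [h1, lint_shift X t 0 h]
    refine lintegral_mono' (Measure.restrict_mono ?_ le_rfl) le_rfl
    exact Ioc_subset_Ioc (by linarith [ht.1]) (by rcases ht with ⟨h1', h2'⟩; linarith)
  -- finiteness of R
  have hR_fin : R ≠ ∞ := by
    have hb : R ≤ ∫⁻ t in I2, (2*C + (2 * ENNReal.ofReal h) * X t) := by
      refine setLIntegral_mono' measurableSet_Ioc (fun t ht => ?_)
      calc ∫⁻ τ in J, g t τ ≤ ∫⁻ τ in J, (2 * X (t+τ) + 2 * X t) := by
            refine lintegral_mono (fun τ => ?_)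
            simpa [hgdef, hXdef] using ofReal_sq_tri (β (t+τ)) 0 (β t)
        _ = (∫⁻ τ in J, 2 * X (t+τ)) + ∫⁻ τ in J, 2 * X t := by
            refine lintegral_add_left ?_ _
            exact (measurable_const.mul (hmX.comp (measurable_const.add measurable_id)))
        _ ≤ 2*C + (2 * ENNReal.ofReal h) * X t := by
            refine add_le_add ?_ ?_
            · rw [lintegral_const_mul' _ _ (by norm_num)]
              exact mul_le_mul_right (hshift t ht) 2
            · rw [setLIntegral_const, hJ, Real.volume_Ioc, sub_zero]
              exact le_of_eq (by ring)
    have hb2 : ∫⁻ t in I2, (2*C + (2 * ENNReal.ofReal h) * X t)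
        = 2*C * volume I2 + (2 * ENNReal.ofReal h) * ∫⁻ t in I2, X t := by
      rw [lintegral_add_left measurable_const, setLIntegral_const,
        lintegral_const_mul' _ _ (by finiteness)]
    have hXI2 : (∫⁻ t in I2, X t) ≤ C := by
      refine lintegral_mono' (Measure.restrict_mono ?_ le_rfl) le_rfl
      exact Ioc_subset_Ioc le_rfl (by linarith)
    refine ne_top_of_le_ne_top ?_ (hb.trans (hb2.le.trans (add_le_add le_rfl
      (mul_le_mul_right hXI2 _))))
    have hvol : volume I2 ≠ ∞ := by rw [hI2, Real.volume_Ioc]; exact ENNReal.ofReal_ne_top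
    exact ENNReal.add_ne_top.2 ⟨ENNReal.mul_ne_top (ENNReal.mul_ne_top (by norm_num) hC) hvol,
      ENNReal.mul_ne_top (ENNReal.mul_ne_top (by norm_num) ENNReal.ofReal_ne_top) hC⟩
  -- main inequality in ℝ≥0∞
  have hprod_meas : AEMeasurable (fun p : ℝ × ℝ => g (p.1 + (h - p.2)) p.2)
      ((volume.restrict I1).prod (volume.restrict J)) :=
    (hmg.comp ((measurable_fst.add (measurable_const.sub measurable_snd)).prodMk
      measurable_snd)).aemeasurable
  have hA : (∫⁻ t in I1, ∫⁻ τ in J, e t τ) ≤ R := by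
    have refl1 : ∀ t : ℝ, (∫⁻ τ in J, e t τ) = ∫⁻ σ in J, g (t + (h - σ)) σ := by
      intro t
      have h1 := lint_reflect (fun τ => e t τ) h 0 h
      simp only [sub_zero] at h1
      rw [show h - h = 0 from sub_self h] at h1
      have h2 : ∀ σ : ℝ, e t (h-σ) = g (t+(h-σ)) σ := by
        intro σ
        simp only [hedef, hgdef]
        ring_nf
      calc ∫⁻ τ in J, e t τ = ∫⁻ σ in Ico (0:ℝ) h, e t (h-σ) := h1.symm
        _ = ∫⁻ σ in Ico (0:ℝ) h, g (t+(h-σ)) σ := lintegral_congr fun σ => h2 σ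
        _ = ∫⁻ σ in J, g (t+(h-σ)) σ := by
            rw [hJ, Measure.restrict_congr_set Ico_ae_eq_Ioc]
    calc ∫⁻ t in I1, ∫⁻ τ in J, e t τ
        = ∫⁻ t in I1, ∫⁻ σ in J, g (t + (h - σ)) σ := lintegral_congr fun t => refl1 t
      _ = ∫⁻ σ in J, ∫⁻ t in I1, g (t + (h - σ)) σ := lintegral_lintegral_swap hprod_meas
      _ ≤ ∫⁻ σ in J, ∫⁻ s in I2, g s σ := by
          refine setLIntegral_mono' measurableSet_Ioc (fun σ hσ => ?_)
          rw [hI1, lint_shift (fun s => g s σ) (h - σ) 0 (T - 2*h)]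
          refine lintegral_mono' (Measure.restrict_mono ?_ le_rfl) le_rfl
          rcases hσ with ⟨hσ1, hσ2⟩
          exact Ioc_subset_Ioc (by linarith) (by linarith)
      _ = ∫⁻ s in I2, ∫⁻ σ in J, g s σ :=
          lintegral_lintegral_swap
            ((hmg.comp (measurable_snd.prodMk measurable_fst)).aemeasurable)
      _ = R := rfl
  have hB : (∫⁻ t in I1, ∫⁻ τ in J, g t τ) ≤ R := by
    refine lintegral_mono' (Measure.restrict_mono ?_ le_rfl) le_rfl
    exact Ioc_subset_Ioc le_rfl (by linarith)
  have key1 : ENNReal.ofReal h * L ≤ 4 * R := by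
    have h1 : ∀ t : ℝ, (∫⁻ τ in J, g t h) = g t h * ENNReal.ofReal h := fun t => by
      rw [setLIntegral_const, hJ, Real.volume_Ioc, sub_zero]
    have e1 : ENNReal.ofReal h * L = ∫⁻ t in I1, ∫⁻ τ in J, g t h := by
      calc ENNReal.ofReal h * L = L * ENNReal.ofReal h := mul_comm _ _
        _ = ∫⁻ t in I1, (g t h * ENNReal.ofReal h) :=
            (lintegral_mul_const' _ _ ENNReal.ofReal_ne_top).symm
        _ = ∫⁻ t in I1, ∫⁻ τ in J, g t h := (lintegral_congr h1).symm
    have step : (∫⁻ t in I1, ∫⁻ τ in J, g t h)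
        ≤ ∫⁻ t in I1, ∫⁻ τ in J, (2 * e t τ + 2 * g t τ) := by
      refine lintegral_mono fun t => lintegral_mono fun τ => ?_
      exact ofReal_sq_tri (β (t+h)) (β (t+τ)) (β t)
    have split : (∫⁻ t in I1, ∫⁻ τ in J, (2 * e t τ + 2 * g t τ))
        = (∫⁻ t in I1, ∫⁻ τ in J, 2 * e t τ) + ∫⁻ t in I1, ∫⁻ τ in J, 2 * g t τ := by
      have h2 : ∀ t : ℝ, (∫⁻ τ in J, (2 * e t τ + 2 * g t τ))
          = (∫⁻ τ in J, 2 * e t τ) + ∫⁻ τ in J, 2 * g t τ := fun t =>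
        lintegral_add_left
          (measurable_const.mul (hme.comp (measurable_const.prodMk measurable_id))) _
      rw [lintegral_congr h2]
      exact lintegral_add_left
        (Measurable.lintegral_prod_right' (measurable_const.mul hme)) _
    have pull_e : (∫⁻ t in I1, ∫⁻ τ in J, 2 * e t τ)
        = 2 * ∫⁻ t in I1, ∫⁻ τ in J, e t τ := by
      rw [← lintegral_const_mul' _ _ (by norm_num : (2:ℝ≥0∞) ≠ ⊤)]
      try exact lintegral_congr fun t => lintegral_const_mul' _ _ (by norm_num)
    have pull_g : (∫⁻ t in I1, ∫⁻ τ in J, 2 * g t τ)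
        = 2 * ∫⁻ t in I1, ∫⁻ τ in J, g t τ := by
      rw [← lintegral_const_mul' _ _ (by norm_num : (2:ℝ≥0∞) ≠ ⊤)]
      try exact lintegral_congr fun t => lintegral_const_mul' _ _ (by norm_num)
    calc ENNReal.ofReal h * L = ∫⁻ t in I1, ∫⁻ τ in J, g t h := e1
      _ ≤ ∫⁻ t in I1, ∫⁻ τ in J, (2 * e t τ + 2 * g t τ) := step
      _ = (∫⁻ t in I1, ∫⁻ τ in J, 2 * e t τ) + ∫⁻ t in I1, ∫⁻ τ in J, 2 * g t τ := split
      _ = 2 * (∫⁻ t in I1, ∫⁻ τ in J, e t τ) + 2 * (∫⁻ t in I1, ∫⁻ τ in J, g t τ) := by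
          rw [pull_e, pull_g]
      _ ≤ 2 * R + 2 * R := add_le_add (mul_le_mul_right hA 2) (mul_le_mul_right hB 2)
      _ = 4 * R := by ring
  -- conversions to real integrals
  have h4R : 4 * R ≠ ∞ := ENNReal.mul_ne_top (by norm_num) hR_fin
  have hhL : ENNReal.ofReal h * L ≠ ∞ := ne_top_of_le_ne_top h4R key1
  have hL_fin : L ≠ ∞ := by
    intro hLtop
    apply hhL
    rw [hLtop, ENNReal.mul_top]
    exact (ENNReal.ofReal_pos.2 hh).ne'
  have meas1 : AEStronglyMeasurable (fun t => ‖β (t+h) - β t‖^2)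
      (volume.restrict I1) := by
    have hmm : Measurable fun t => ‖β (t+h) - β t‖^2 :=
      (((hm.comp_measurable (measurable_id.add_const h)).sub hm).norm.measurable).pow_const 2
    exact hmm.aestronglyMeasurable
  have eqL : (∫ t in (0:ℝ)..(T - 2*h), ‖β (t+h) - β t‖^2) = L.toReal := by
    rw [intervalIntegral.integral_of_le hT2,
      integral_eq_lintegral_of_nonneg_ae (ae_of_all _ fun t => by positivity) meas1]
  have eqInner : ∀ t : ℝ, (∫ τ in (0:ℝ)..h, ‖β (t+τ) - β t‖^2)
      = (∫⁻ τ in J, g t τ).toReal := by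
    intro t
    have hmm : Measurable fun τ => ‖β (t+τ) - β t‖^2 :=
      (((hm.comp_measurable (measurable_const.add measurable_id)).sub
        stronglyMeasurable_const).norm.measurable).pow_const 2
    rw [intervalIntegral.integral_of_le hh.le,
      integral_eq_lintegral_of_nonneg_ae (ae_of_all _ fun τ => by positivity)
        hmm.aestronglyMeasurable]
  have measPhi : Measurable (fun t => ∫⁻ τ in J, g t τ) :=
    Measurable.lintegral_prod_right' hmg
  have haefin : ∀ᵐ t ∂(volume.restrict I2), (∫⁻ τ in J, g t τ) < ∞ :=
    ae_lt_top measPhi hR_fin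
  have eqR : (∫ t in (0:ℝ)..(T-h), ∫ τ in (0:ℝ)..h, ‖β (t+τ) - β t‖^2) = R.toReal := by
    rw [intervalIntegral.integral_of_le hTh]
    calc (∫ t in Ioc (0:ℝ) (T-h), ∫ τ in (0:ℝ)..h, ‖β (t+τ) - β t‖^2)
        = ∫ t in Ioc (0:ℝ) (T-h), ((∫⁻ τ in J, g t τ).toReal) :=
          integral_congr_ae (ae_of_all _ fun t => eqInner t)
      _ = R.toReal := integral_toReal measPhi.aemeasurable haefin
  rw [eqL, eqR]
  have h1 : (ENNReal.ofReal h * L).toReal ≤ (4 * R).toReal := ENNReal.toReal_mono h4R key1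
  rw [ENNReal.toReal_mul, ENNReal.toReal_mul, ENNReal.toReal_ofReal hh.le] at h1
  have h2 : h * L.toReal ≤ 4 * R.toReal := by simpa using h1
  have hne : h ≠ 0 := hh.ne'
  calc h⁻¹ * L.toReal = (h^2)⁻¹ * (h * L.toReal) := by field_simp
    _ ≤ (h^2)⁻¹ * (4 * R.toReal) := by
        exact mul_le_mul_of_nonneg_left h2 (by positivity)
    _ = 4 * (h^2)⁻¹ * R.toReal := by ring

end Stmt5Aux

open MeasureTheory

theorem stmt5 (H : Type*) [NormedAddCommGroup H] [InnerProductSpace ℝ H]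
    (T h : ℝ) (hT : 0 < T) (hh : 0 < h) (hh2 : h < T/2)
    (β : ℝ → H) (hmeas : AEStronglyMeasurable β volume)
    (hL2 : IntegrableOn (fun t => ‖β t‖^2) (Set.Ioc 0 T)) :
    h⁻¹ * ∫ t in (0:ℝ)..(T - 2*h), ‖β (t+h) - β t‖^2 ≤
      4 * (h^2)⁻¹ * ∫ t in (0:ℝ)..(T-h), ∫ τ in (0:ℝ)..h, ‖β (t+τ) - β t‖^2 := by
  set β' : ℝ → H := hmeas.mk β with hβ'def
  have hmk : StronglyMeasurable β' := hmeas.stronglyMeasurable_mk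
  have heq : β =ᵐ[volume] β' := hmeas.ae_eq_mk
  have hL2' : IntegrableOn (fun t => ‖β' t‖^2) (Set.Ioc 0 T) := by
    refine hL2.congr ?_
    exact ae_restrict_of_ae (heq.mono fun t ht => by simp only []; rw [ht])
  have main := Stmt5Aux.key T h hh hh2 β' hmk hL2'
  have shiftae : ∀ c : ℝ, (fun t : ℝ => β (t + c)) =ᵐ[volume] fun t => β' (t + c) := by
    intro c
    have h1 : β ∘ (fun x : ℝ => x + c) =ᵐ[volume] β' ∘ (fun x : ℝ => x + c) := by
      refine ae_eq_comp (measurable_id.add_const c).aemeasurable ?_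
      rw [(measurePreserving_add_right volume c).map_eq]
      exact heq
    exact h1
  have leftae : ∀ t : ℝ, (fun τ : ℝ => β (t + τ)) =ᵐ[volume] fun τ => β' (t + τ) := by
    intro t
    have h1 : β ∘ (fun x : ℝ => t + x) =ᵐ[volume] β' ∘ (fun x : ℝ => t + x) := by
      refine ae_eq_comp (measurable_const.add measurable_id).aemeasurable ?_
      rw [(measurePreserving_add_left volume t).map_eq]
      exact heq
    exact h1
  have eqLHS : (∫ t in (0:ℝ)..(T - 2*h), ‖β (t+h) - β t‖^2)
      = ∫ t in (0:ℝ)..(T - 2*h), ‖β' (t+h) - β' t‖^2 := by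
    apply intervalIntegral.integral_congr_ae
    filter_upwards [shiftae h, heq] with t h1 h2 _
    rw [h1, h2]
  have eqRHS : (∫ t in (0:ℝ)..(T-h), ∫ τ in (0:ℝ)..h, ‖β (t+τ) - β t‖^2)
      = ∫ t in (0:ℝ)..(T-h), ∫ τ in (0:ℝ)..h, ‖β' (t+τ) - β' t‖^2 := by
    apply intervalIntegral.integral_congr_ae
    filter_upwards [heq] with t ht _
    apply intervalIntegral.integral_congr_ae
    filter_upwards [leftae t] with τ hτ _
    rw [hτ, ht]
  rw [eqLHS, eqRHS]
  exact main
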